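/- Let H be a finite abelian group and let C, S ⊆ H with C nonempty, H = ⟨C⟩ (C generates H), and def_H(S) ≥ |C|/2. Then there exists c ∈ C with λ_S(c) ≥ |C|/8. -/

import Mathlib

open Finset
open scoped Pointwise

/-- `λ_S(c) = |(S + c) \ S|`. -/
def lam {H : Type*} [AddCommGroup H] [DecidableEq H] (S : Finset H) (c : H) : ℕ :=
  ((S.image (· + c)) \ S).card

/-- `def_H(S) = min {|S|, |H \ S|}`. -/
def deficiency {H : Type*} [AddCommGroup H] [Fintype H] [DecidableEq H] (S : Finset H) : ℕ :=
  min S.card Sᶜ.card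

section Lam
variable {H : Type*} [AddCommGroup H] [DecidableEq H] (S : Finset H)

lemma lam_zero : lam S 0 = 0 := by
  simp [lam]

lemma lam_le_card (c : H) : lam S c ≤ S.card :=
  (Finset.card_le_card sdiff_subset).trans Finset.card_image_le

lemma lam_neg (c : H) : lam S (-c) = lam S c := by
  have key : ∀ a b : H, ((S.image (· + a)) ∩ S).card = ((S.image (· + a)) ∩ S).card := fun _ _ => rfl
  have h1 : ∀ a : H, lam S a + ((S.image (· + a)) ∩ S).card = S.card := by
    intro a
    rw [lam, Finset.card_sdiff_add_card_inter]
    exact Finset.card_image_of_injective S (add_left_injective a)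
  have h2 : ((S.image (· + (-c))) ∩ S).card = ((S.image (· + c)) ∩ S).card := by
    apply Finset.card_bij (fun x _ => x + c)
    · rintro x hx
      rw [Finset.mem_inter] at hx ⊢
      obtain ⟨hx1, hx2⟩ := hx
      constructor
      · exact Finset.mem_image_of_mem _ hx2
      · rw [Finset.mem_image] at hx1
        obtain ⟨s, hs, rfl⟩ := hx1
        simpa using hs
    · intro x _ y _ h
      exact add_right_cancel h
    · rintro y hy
      rw [Finset.mem_inter] at hy
      obtain ⟨hy1, hy2⟩ := hy
      refine ⟨y + (-c), ?_, by abel⟩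
      rw [Finset.mem_inter]
      constructor
      · exact Finset.mem_image_of_mem _ hy2
      · rw [Finset.mem_image] at hy1
        obtain ⟨s, hs, rfl⟩ := hy1
        simpa using hs
  have ha := h1 (-c); have hb := h1 c; rw [h2] at ha
  omega

lemma lam_add_le (a b : H) : lam S (a + b) ≤ lam S a + lam S b := by
  have himg : S.image (· + (a + b)) = (S.image (· + a)).image (· + b) := by
    rw [Finset.image_image]
    congr 1
    ext x
    simp [add_assoc]
  have hsub : (S.image (· + (a + b))) \ S ⊆
      (((S.image (· + a)).image (· + b)) \ (S.image (· + b))) ∪ ((S.image (· + b)) \ S) := by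
    rw [himg]
    intro x hx
    rw [Finset.mem_sdiff] at hx
    by_cases h : x ∈ S.image (· + b)
    · exact Finset.mem_union_right _ (Finset.mem_sdiff.2 ⟨h, hx.2⟩)
    · exact Finset.mem_union_left _ (Finset.mem_sdiff.2 ⟨hx.1, h⟩)
  have h1 : (((S.image (· + a)).image (· + b)) \ (S.image (· + b))).card = lam S a := by
    rw [← Finset.image_sdiff _ _ (add_left_injective b)]
    exact Finset.card_image_of_injective _ (add_left_injective b)
  calc lam S (a + b) ≤ ((((S.image (· + a)).image (· + b)) \ (S.image (· + b))) ∪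
        ((S.image (· + b)) \ S)).card := Finset.card_le_card hsub
    _ ≤ _ := by
        refine (Finset.card_union_le _ _).trans ?_
        rw [h1]
        exact le_of_eq rfl

end Lam

section LamFin
variable {H : Type*} [AddCommGroup H] [Fintype H] [DecidableEq H] (S : Finset H)

lemma lam_le_compl (c : H) : lam S c ≤ Sᶜ.card := by
  apply Finset.card_le_card
  intro x hx
  rw [Finset.mem_sdiff] at hx
  simpa using hx.2

lemma sum_lam : ∑ h ∈ univ, lam S h = Sᶜ.card * S.card := by
  rw [← Finset.card_product]
  rw [Finset.card_eq_sum_card_fiberwise (f := fun p : H × H => p.1 - p.2)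
    (t := univ) (fun x _ => mem_univ _)]
  refine Finset.sum_congr rfl fun h _ => ?_
  symm
  unfold lam
  apply Finset.card_bij (fun p _ => p.1)
  · rintro ⟨t, s⟩ hp
    rw [Finset.mem_filter, Finset.mem_product] at hp
    obtain ⟨⟨ht, hs⟩, heq⟩ := hp
    simp only at heq ht hs
    rw [Finset.mem_sdiff]
    constructor
    · refine Finset.mem_image.2 ⟨s, hs, ?_⟩
      simp only
      rw [← heq]; abel
    · simpa using ht
  · rintro ⟨t, s⟩ hp ⟨t', s'⟩ hp' h
    rw [Finset.mem_filter, Finset.mem_product] at hp hp'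
    simp only at h
    subst h
    have : s = s' := by
      have e1 := hp.2; have e2 := hp'.2
      simp only at e1 e2
      have := e1.trans e2.symm
      exact (sub_right_injective this).symm ▸ rfl
    simp [this]
  · rintro t ht
    rw [Finset.mem_sdiff] at ht
    obtain ⟨ht1, ht2⟩ := ht
    rw [Finset.mem_image] at ht1
    obtain ⟨s, hs, rfl⟩ := ht1
    refine ⟨(s + h, s), ?_, rfl⟩
    rw [Finset.mem_filter, Finset.mem_product]
    refine ⟨⟨by simpa using ht2, hs⟩, by simp⟩

end LamFin

section Growth
variable {H : Type*} [AddCommGroup H] [Fintype H] [DecidableEq H]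

lemma growth_lemma (A B : Finset H) (hA0 : (0:H) ∈ A) (hAs : ∀ a ∈ A, -a ∈ A)
    (hAgen : AddSubgroup.closure (A : Set H) = ⊤) (hB : B.Nonempty) (hBA : B + A ≠ univ) :
    2 * B.card + A.card ≤ 2 * (B + A).card := by
  classical
  have hsub : ∀ X : Finset H, X ⊆ X + A := by
    intro X x hx
    have := Finset.add_mem_add hx hA0
    simpa using this
  -- fragments
  set Frag : Finset H → Prop := fun X => X.Nonempty ∧ X + A ≠ univ with hFrag
  have hFragB : Frag B := ⟨hB, hBA⟩
  set F : Finset (Finset H) := univ.filter Frag with hF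
  have hBF : B ∈ F := Finset.mem_filter.2 ⟨Finset.mem_univ _, hFragB⟩
  have hFne : F.Nonempty := ⟨B, hBF⟩
  set bnd : Finset H → ℕ := fun X => (X + A).card - X.card with hbnd
  have hcard : ∀ X : Finset H, X.card + bnd X = (X + A).card := by
    intro X
    have := Finset.card_le_card (hsub X)
    simp only [hbnd]
    omega
  obtain ⟨K₀, hK₀F, hK₀min⟩ := F.exists_min_image bnd hFne
  set κ := bnd K₀ with hκ
  have hκle : ∀ X : Finset H, Frag X → X.card + κ ≤ (X + A).card := by
    intro X hX
    have hXF : X ∈ F := Finset.mem_filter.2 ⟨Finset.mem_univ _, hX⟩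
    have := hK₀min X hXF
    have h2 := hcard X
    omega
  set F2 : Finset (Finset H) := F.filter (fun X => bnd X = κ) with hF2
  have hK₀F2 : K₀ ∈ F2 := Finset.mem_filter.2 ⟨hK₀F, rfl⟩
  obtain ⟨K', hK'F2, hK'min⟩ := F2.exists_min_image card ⟨K₀, hK₀F2⟩
  have hK'frag : Frag K' := by
    rw [hF2, Finset.mem_filter] at hK'F2
    have := hK'F2.1
    rw [hF, Finset.mem_filter] at this
    exact this.2
  have hK'bnd : bnd K' = κ := by
    rw [hF2, Finset.mem_filter] at hK'F2
    exact hK'F2.2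
  -- translation facts
  have htrans : ∀ (X : Finset H) (h : H), (X + {h}) + A = (X + A) + {h} := by
    intro X h; exact add_right_comm X {h} A
  have hcard_tr : ∀ (X : Finset H) (h : H), (X + {h}).card = X.card := by
    intro X h; exact Finset.card_add_singleton X h
  have huniv_tr : ∀ (X : Finset H) (h : H), (X + {h}) = univ ↔ X = univ := by
    intro X h
    constructor
    · intro he
      apply Finset.eq_univ_of_card
      have := hcard_tr X h
      rw [he] at this
      rw [← this, Finset.card_univ]
    · rintro rfl
      apply Finset.eq_univ_of_card
      rw [hcard_tr, Finset.card_univ]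
  have hfrag_tr : ∀ (X : Finset H) (h : H), Frag X → Frag (X + {h}) := by
    intro X h hX
    constructor
    · obtain ⟨x, hx⟩ := hX.1
      exact ⟨x + h, Finset.add_mem_add hx (Finset.mem_singleton_self h)⟩
    · rw [htrans]
      intro he
      exact hX.2 ((huniv_tr (X + A) h).1 he)
  have hbnd_tr : ∀ (X : Finset H) (h : H), bnd (X + {h}) = bnd X := by
    intro X h
    simp only [hbnd]
    rw [htrans, hcard_tr, hcard_tr]
  -- the atom containing 0
  obtain ⟨x₀, hx₀⟩ := hK'frag.1
  set K : Finset H := K' + {-x₀} with hK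
  have h0K : (0:H) ∈ K := by
    have : x₀ + (-x₀) ∈ K := Finset.add_mem_add hx₀ (Finset.mem_singleton_self _)
    simpa using this
  have hKfrag : Frag K := hfrag_tr K' (-x₀) hK'frag
  have hKbnd : bnd K = κ := by rw [hK, hbnd_tr]; exact hK'bnd
  have hKcard : K.card = K'.card := hcard_tr K' (-x₀)
  have hKmin : ∀ X : Finset H, Frag X → bnd X = κ → K.card ≤ X.card := by
    intro X hX hbX
    rw [hKcard]
    apply hK'min
    exact Finset.mem_filter.2 ⟨Finset.mem_filter.2 ⟨Finset.mem_univ _, hX⟩, hbX⟩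
  have hKA : K.card + κ = (K + A).card := by
    have := hcard K; rw [hKbnd] at this; exact this
  -- submodularity
  have hsubmod : ∀ X Y : Finset H,
      ((X ∩ Y) + A).card + ((X ∪ Y) + A).card ≤ (X + A).card + (Y + A).card := by
    intro X Y
    have h1 : (X ∩ Y) + A ⊆ (X + A) ∩ (Y + A) := Finset.inter_add_subset
    have h2 : (X ∪ Y) + A = (X + A) ∪ (Y + A) := Finset.union_add
    calc ((X ∩ Y) + A).card + ((X ∪ Y) + A).card
        ≤ ((X + A) ∩ (Y + A)).card + ((X + A) ∪ (Y + A)).card := by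
          rw [h2]
          exact Nat.add_le_add_right (Finset.card_le_card h1) _
      _ = (X + A).card + (Y + A).card := Finset.card_inter_add_card_union _ _
  -- sub-fragment
  have hfrag_sub : ∀ X Y : Finset H, X ⊆ Y → X.Nonempty → Frag Y → Frag X := by
    intro X Y hXY hXne hY
    refine ⟨hXne, ?_⟩
    intro he
    apply hY.2
    apply Finset.univ_subset_iff.1
    rw [← he]
    exact Finset.add_subset_add_right hXY
  -- co-fragment
  have hco_miss : ∀ X : Finset H, ∀ z ∈ (X + A)ᶜ + A, z ∉ X := by
    intro X z hz hzX
    rw [Finset.mem_add] at hz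
    obtain ⟨y, hy, a, ha, rfl⟩ := hz
    rw [Finset.mem_compl] at hy
    apply hy
    have : (y + a) + (-a) ∈ X + A := Finset.add_mem_add hzX (hAs a ha)
    simpa using this
  have hco_frag : ∀ X : Finset H, Frag X → Frag ((X + A)ᶜ) := by
    intro X hX
    constructor
    · rw [← Finset.card_pos, Finset.card_compl, Finset.card_univ.symm]
      have : (X + A).card < univ.card := Finset.card_lt_card
        (Finset.ssubset_univ_iff.2 hX.2)
      omega
    · intro he
      obtain ⟨x, hx⟩ := hX.1
      have : x ∈ (X + A)ᶜ + A := he ▸ Finset.mem_univ x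
      exact hco_miss X x this hx
  have hco_bnd : ∀ X : Finset H, Frag X → ((X + A)ᶜ + A).card ≤ ((X + A)ᶜ).card + bnd X := by
    intro X hX
    have hss : (X + A)ᶜ + A ⊆ (X + A)ᶜ ∪ ((X + A) \ X) := by
      intro z hz
      by_cases h : z ∈ X + A
      · exact Finset.mem_union_right _ (Finset.mem_sdiff.2 ⟨h, hco_miss X z hz⟩)
      · exact Finset.mem_union_left _ (Finset.mem_compl.2 h)
    calc ((X + A)ᶜ + A).card ≤ ((X + A)ᶜ ∪ ((X + A) \ X)).card := Finset.card_le_card hss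
      _ ≤ ((X + A)ᶜ).card + ((X + A) \ X).card := Finset.card_union_le _ _
      _ = ((X + A)ᶜ).card + bnd X := by
          congr 1
          rw [Finset.card_sdiff_of_subset (hsub X)]
  -- the atom is invariant under translation by its elements
  have hatom : ∀ x ∈ K, K + {x} = K := by
    intro x hx
    by_contra hne
    set Bx : Finset H := K + {x} with hBx
    have hBxfrag : Frag Bx := hfrag_tr K x hKfrag
    have hBxbnd : bnd Bx = κ := (hbnd_tr K x).trans hKbnd
    have hBxcard : Bx.card = K.card := hcard_tr K x
    have hxI : x ∈ K ∩ Bx := by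
      rw [Finset.mem_inter]
      refine ⟨hx, ?_⟩
      have : (0:H) + x ∈ Bx := Finset.add_mem_add h0K (Finset.mem_singleton_self x)
      simpa using this
    have hIfrag : Frag (K ∩ Bx) :=
      hfrag_sub _ K Finset.inter_subset_left ⟨x, hxI⟩ hKfrag
    have hIbound := hκle _ hIfrag
    have hBxA : (Bx + A).card = Bx.card + κ := by
      have := hcard Bx; rw [hBxbnd] at this; omega
    by_cases hcase : (K ∪ Bx) + A = univ
    · -- Case 2
      set Ks : Finset H := (K + A)ᶜ with hKs
      have hKsfrag : Frag Ks := hco_frag K hKfrag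
      have hKsbnd : bnd Ks = κ := by
        have h1 := hco_bnd K hKfrag
        rw [hKbnd, ← hKs] at h1
        have h2 := hκle Ks hKsfrag
        have h3 := hcard Ks
        omega
      have hKscard : K.card ≤ Ks.card := hKmin Ks hKsfrag hKsbnd
      have hn1 : (K + A).card + Ks.card = Fintype.card H := Finset.card_add_card_compl _
      -- so n ≥ 2|K| + κ
      -- upper bound on n
      have hI : (K ∩ Bx) + A ⊆ (K + A) ∩ (Bx + A) := Finset.inter_add_subset
      have hU : (K + A) ∪ (Bx + A) = univ := by rw [← Finset.union_add]; exact hcase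
      have hcu : ((K + A) ∩ (Bx + A)).card + Fintype.card H
          = (K + A).card + (Bx + A).card := by
        rw [← Finset.card_univ, ← hU]
        exact Finset.card_inter_add_card_union _ _
      have hIc2 : (K ∩ Bx + A).card ≤ ((K + A) ∩ (Bx + A)).card := Finset.card_le_card hI
      have h0 : 1 ≤ (K ∩ Bx).card := Finset.card_pos.2 ⟨x, hxI⟩
      omega
    · -- Case 1
      have hUfrag : Frag (K ∪ Bx) := ⟨⟨x, Finset.mem_union_left _ hx⟩, hcase⟩
      have hUbound := hκle _ hUfrag
      have hsm := hsubmod K Bx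
      have hiu : (K ∩ Bx).card + (K ∪ Bx).card = K.card + Bx.card :=
        Finset.card_inter_add_card_union _ _
      have hIbnd : bnd (K ∩ Bx) = κ := by
        have h3 := hcard (K ∩ Bx)
        omega
      have hgeK : K.card ≤ (K ∩ Bx).card := hKmin _ hIfrag hIbnd
      have hIK : K ∩ Bx = K :=
        Finset.eq_of_subset_of_card_le Finset.inter_subset_left (by omega)
      have hKBx : K ⊆ Bx := by
        rw [← hIK]; exact Finset.inter_subset_right
      exact hne (Finset.eq_of_subset_of_card_le hKBx (by omega)).symm
  -- K is closed under addition and negation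
  have hKadd : ∀ x ∈ K, ∀ y ∈ K, x + y ∈ K := by
    intro x hx y hy
    have : x + y ∈ K + {y} := Finset.add_mem_add hx (Finset.mem_singleton_self y)
    rwa [hatom y hy] at this
  have hKneg : ∀ x ∈ K, -x ∈ K := by
    intro x hx
    have h0' : (0:H) ∈ K + {x} := by rw [hatom x hx]; exact h0K
    rw [Finset.mem_add] at h0'
    obtain ⟨y, hy, c, hc, hyc⟩ := h0'
    rw [Finset.mem_singleton] at hc
    rw [hc] at hyc
    have hyx : y = -x := eq_neg_of_add_eq_zero_left hyc
    rwa [← hyx]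
  -- there is an element of A outside K
  have haK : ∃ a ∈ A, a ∉ K := by
    by_contra hcon
    push_neg at hcon
    set G : AddSubgroup H := {
      carrier := ↑K
      zero_mem' := by exact_mod_cast h0K
      add_mem' := by
        intro x y hxm hym
        exact_mod_cast hKadd x (by exact_mod_cast hxm) y (by exact_mod_cast hym)
      neg_mem' := by
        intro x hxm
        exact_mod_cast hKneg x (by exact_mod_cast hxm) } with hG
    have hle : (⊤ : AddSubgroup H) ≤ G := by
      rw [← hAgen]
      apply AddSubgroup.closure_le G |>.2
      intro a ha
      exact_mod_cast hcon a (by exact_mod_cast ha)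
    have hKuniv : K = univ := by
      apply Finset.eq_univ_of_forall
      intro x
      have : x ∈ G := hle (AddSubgroup.mem_top x)
      exact_mod_cast this
    apply hKfrag.2
    apply Finset.univ_subset_iff.1
    rw [← hKuniv]
    exact hsub K
  obtain ⟨a₀, ha₀A, ha₀K⟩ := haK
  -- |K| ≤ κ
  have hKκ : K.card ≤ κ := by
    have hdisj : Disjoint K (K + {a₀}) := by
      rw [Finset.disjoint_left]
      intro z hzK hzI
      rw [Finset.mem_add] at hzI
      obtain ⟨y, hy, c, hc, rfl⟩ := hzI
      rw [Finset.mem_singleton] at hc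
      subst hc
      apply ha₀K
      have : -y + (y + c) ∈ K := hKadd _ (hKneg y hy) _ hzK
      simpa using this
    have hss : K ∪ (K + {a₀}) ⊆ K + A := by
      apply Finset.union_subset (hsub K)
      exact Finset.add_subset_add_left (Finset.singleton_subset_iff.2 ha₀A)
    have := Finset.card_le_card hss
    rw [Finset.card_union_of_disjoint hdisj, hcard_tr K a₀] at this
    omega
  -- |A| ≤ 2κ
  have hAκ : A.card ≤ 2 * κ := by
    have h1 : (A ∩ K).card ≤ K.card := Finset.card_le_card Finset.inter_subset_right
    have h2 : A \ K ⊆ (K + A) \ K := by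
      intro a ha
      rw [Finset.mem_sdiff] at ha ⊢
      refine ⟨?_, ha.2⟩
      have : (0:H) + a ∈ K + A := Finset.add_mem_add h0K ha.1
      simpa using this
    have h3 : ((K + A) \ K).card = κ := by
      rw [Finset.card_sdiff_of_subset (hsub K)]
      omega
    have h4 := Finset.card_le_card h2
    have h5 := Finset.card_inter_add_card_sdiff A K
    omega
  -- conclude
  have := hκle B hFragB
  omega

end Growth

lemma endgame (a b d m J : ℝ)
    (H1 : b * d - b * (J * m) ≤ d * d)
    (H2 : (J + 1) * a ≤ 2 * b)
    (H3 : d ≤ (J + 1) * (2 * m))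
    (H4 : J * (2 * m) ≤ d - 1)
    (H5 : 8 * m + 1 ≤ a)
    (H7 : 1 ≤ d) (H8 : 1 ≤ m) (H9 : 1 ≤ b) (H10 : 0 ≤ J) : False := by
  have ha0 : (0:ℝ) ≤ a := by linarith
  have t1 : d * a ≤ ((J + 1) * (2 * m)) * a := mul_le_mul_of_nonneg_right H3 ha0
  have t2 : (2 * m) * ((J + 1) * a) ≤ (2 * m) * (2 * b) :=
    mul_le_mul_of_nonneg_left H2 (by linarith)
  have S1 : d * a ≤ 4 * (m * b) := by nlinarith [t1, t2]
  have t3 : b * (J * (2 * m)) ≤ b * (d - 1) := mul_le_mul_of_nonneg_left H4 (by linarith)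
  have S2 : b * (d + 1) ≤ 2 * (d * d) := by nlinarith [H1, t3]
  have t4 : (d * a) * (d + 1) ≤ (4 * (m * b)) * (d + 1) :=
    mul_le_mul_of_nonneg_right S1 (by linarith)
  have t5 : (4 * m) * (b * (d + 1)) ≤ (4 * m) * (2 * (d * d)) :=
    mul_le_mul_of_nonneg_left S2 (by linarith)
  have t6 : (8 * m + 1) * (d * (d + 1)) ≤ a * (d * (d + 1)) :=
    mul_le_mul_of_nonneg_right H5 (by nlinarith)
  have hmd : (0:ℝ) < m * d := mul_pos (by linarith) (by linarith)
  nlinarith [t4, t5, t6, hmd, H7]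

theorem stmt7 {H : Type*} [AddCommGroup H] [Fintype H] [DecidableEq H]
    (C S : Finset H) (hC : C.Nonempty)
    (hgen : AddSubgroup.closure (C : Set H) = ⊤)
    (hdef : (deficiency S : ℝ) ≥ (C.card : ℝ) / 2) :
    ∃ c ∈ C, (lam S c : ℝ) ≥ (C.card : ℝ) / 8 := by
  classical
  by_contra hcon
  push_neg at hcon
  have hk1 : 1 ≤ C.card := Finset.card_pos.2 hC
  have hdS : deficiency S ≤ S.card := min_le_left _ _
  have hdSc : deficiency S ≤ Sᶜ.card := min_le_right _ _
  have hnsum : S.card + Sᶜ.card = Fintype.card H := Finset.card_add_card_compl S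
  obtain ⟨cmax, hcmaxC, hcmax⟩ := C.exists_max_image (lam S) hC
  set m := lam S cmax with hm
  set k := C.card with hk
  set d := deficiency S with hd
  set n := Fintype.card H with hn
  have hmk : 8 * m + 1 ≤ k := by
    have h8 : (m : ℝ) < k / 8 := hcon cmax hcmaxC
    have : ((8 * m : ℕ) : ℝ) < (k : ℝ) := by push_cast; linarith
    exact_mod_cast this
  have hkd : k ≤ 2 * d := by
    have : (k : ℝ) ≤ ((2 * d : ℕ) : ℝ) := by push_cast; linarith [hdef]
    exact_mod_cast this
  have hd1 : 1 ≤ d := by omega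
  have hn2d : 2 * d ≤ n := by omega
  have hlamled : ∀ h : H, lam S h ≤ d := fun h => le_min (lam_le_card S h) (lam_le_compl S h)
  -- key identity : Σ + d² = n d
  have hkey : Sᶜ.card * S.card + d * d = n * d := by
    rcases min_cases S.card Sᶜ.card with ⟨h1, h2⟩ | ⟨h1, h2⟩
    · have : d = S.card := by rw [hd, deficiency, h1]
      rw [this]; nlinarith [hnsum]
    · have : d = Sᶜ.card := by rw [hd, deficiency, h1]
      rw [this]; nlinarith [hnsum]
  -- the symmetrized generating set
  set A : Finset H := (C ∪ C.image (fun c => -c)) ∪ {0} with hA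
  have hA0 : (0:H) ∈ A := by simp [hA]
  have hCA : C ⊆ A := fun c hc =>
    Finset.mem_union_left _ (Finset.mem_union_left _ hc)
  have hAs : ∀ a ∈ A, -a ∈ A := by
    intro a ha
    simp only [hA, Finset.mem_union, Finset.mem_image, Finset.mem_singleton] at ha ⊢
    rcases ha with (hc | ⟨c, hc, rfl⟩) | rfl
    · exact Or.inl (Or.inr ⟨a, hc, rfl⟩)
    · exact Or.inl (Or.inl (by simpa using hc))
    · exact Or.inr (by simp)
  have hAgen : AddSubgroup.closure (A : Set H) = ⊤ := by
    rw [eq_top_iff, ← hgen]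
    exact AddSubgroup.closure_mono (by exact_mod_cast hCA)
  have hAk : k ≤ A.card := Finset.card_le_card hCA
  have hlamA : ∀ a ∈ A, lam S a ≤ m := by
    intro a ha
    simp only [hA, Finset.mem_union, Finset.mem_image, Finset.mem_singleton] at ha
    rcases ha with (hc | ⟨c, hc, rfl⟩) | rfl
    · exact hcmax a hc
    · rw [lam_neg]; exact hcmax c hc
    · rw [lam_zero]; omega
  by_cases hm0 : m = 0
  · -- all lam vanish, contradiction with d ≥ 1
    have hall : ∀ h : H, lam S h = 0 := by
      intro h
      set Z : AddSubgroup H := {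
        carrier := {x : H | lam S x = 0}
        zero_mem' := lam_zero S
        add_mem' := by
          intro a b haZ hbZ
          simp only [Set.mem_setOf_eq] at haZ hbZ ⊢
          have := lam_add_le S a b
          omega
        neg_mem' := by
          intro a haZ
          simp only [Set.mem_setOf_eq] at haZ ⊢
          rw [lam_neg]; exact haZ } with hZ
      have hle : (⊤ : AddSubgroup H) ≤ Z := by
        rw [← hgen]
        apply (AddSubgroup.closure_le Z).2
        intro c hc
        have hcC : c ∈ C := by exact_mod_cast hc
        have : lam S c ≤ m := hcmax c hcC
        show lam S c = 0
        omega
      exact hle (AddSubgroup.mem_top h)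
    have hzero : ∑ h ∈ univ, lam S h = 0 := Finset.sum_eq_zero fun h _ => hall h
    rw [sum_lam S] at hzero
    rcases Nat.mul_eq_zero.1 hzero with h | h <;> omega
  · -- main case m ≥ 1
    have hm1 : 1 ≤ m := by omega
    have h2mpos : 0 < 2 * m := by omega
    set J := (d - 1) / (2 * m) with hJ
    have hJ1 : J * (2 * m) ≤ d - 1 := Nat.div_mul_le_self _ _
    have hJ2 : d ≤ (J + 1) * (2 * m) := by
      have h := (Nat.div_lt_iff_lt_mul h2mpos).1 (Nat.lt_succ_self J)
      have h' : d - 1 < (J + 1) * (2 * m) := by simpa [Nat.succ_eq_add_one] using h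
      omega
    have hJge1 : 1 ≤ J := by
      rw [hJ, Nat.one_le_div_iff h2mpos]
      omega
    set BB : ℕ → Finset H := fun j => univ.filter (fun h => lam S h ≤ j * m) with hBB
    have hmemBB : ∀ j (h : H), h ∈ BB j ↔ lam S h ≤ j * m := by
      intro j h; rw [hBB]; simp
    have h0BB : ∀ j, (0:H) ∈ BB j := by
      intro j; rw [hmemBB, lam_zero]; omega
    have hABB : A ⊆ BB 1 := by
      intro a ha; rw [hmemBB]
      have := hlamA a ha; omega
    have hBBmono : ∀ i j : ℕ, i ≤ j → BB i ⊆ BB j := by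
      intro i j hij x hx
      rw [hmemBB] at hx ⊢
      have : i * m ≤ j * m := Nat.mul_le_mul_right m hij
      omega
    have hBBadd : ∀ j, BB j + A ⊆ BB (j + 1) := by
      intro j z hz
      rw [Finset.mem_add] at hz
      obtain ⟨x, hx, a, ha, rfl⟩ := hz
      rw [hmemBB] at hx ⊢
      have h1 := lam_add_le S x a
      have h2 := hlamA a ha
      have : (j + 1) * m = j * m + m := by ring
      omega
    -- BB J ≠ univ
    have hBJne : BB J ≠ univ := by
      intro he
      have hall : ∀ h : H, lam S h ≤ J * m := by
        intro h
        have : h ∈ BB J := he.symm ▸ Finset.mem_univ h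
        rwa [hmemBB] at this
      have hsum_le : ∑ h ∈ univ, lam S h ≤ n * (J * m) := by
        calc ∑ h ∈ univ, lam S h ≤ ∑ _h ∈ (univ : Finset H), (J * m) :=
              Finset.sum_le_sum fun h _ => hall h
          _ = n * (J * m) := by rw [Finset.sum_const, Finset.card_univ, smul_eq_mul]
      rw [sum_lam S] at hsum_le
      have hJ1' : 2 * (J * m) ≤ d - 1 := by
        have : J * (2 * m) = 2 * (J * m) := by ring
        omega
      have h2 : d * n ≤ 2 * (Sᶜ.card * S.card) := by nlinarith [hdS, hdSc, hnsum]
      have step1 : 2 * (Sᶜ.card * S.card) ≤ n * (2 * (J * m)) := by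
        calc 2 * (Sᶜ.card * S.card) ≤ 2 * (n * (J * m)) := Nat.mul_le_mul_left 2 hsum_le
          _ = n * (2 * (J * m)) := by ring
      have step2 : n * (2 * (J * m)) ≤ n * (d - 1) := Nat.mul_le_mul_left n hJ1'
      have step4 : n * (d - 1) < n * d :=
        mul_lt_mul_of_pos_left (by omega) (by omega)
      have : d * n < n * d := lt_of_le_of_lt (le_trans h2 (le_trans step1 step2)) step4
      rw [mul_comm] at this
      exact lt_irrefl _ this
    -- growth chain
    have hchain : ∀ j : ℕ, 1 ≤ j → j ≤ J → (j + 1) * A.card ≤ 2 * (BB j).card := by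
      intro j
      induction j with
      | zero => omega
      | succ i ih =>
        intro _ hjJ
        by_cases hi0 : i = 0
        · subst hi0
          have hcc := Finset.card_le_card hABB
          simp only [zero_add]
          omega
        · have hi1 : 1 ≤ i := by omega
          have hIH := ih hi1 (by omega)
          have hne : BB i + A ≠ univ := by
            intro he
            apply hBJne
            apply Finset.univ_subset_iff.1
            rw [← he]
            exact (hBBadd i).trans (hBBmono _ _ (by omega))
          have hgrow := growth_lemma A (BB i) hA0 hAs hAgen ⟨0, h0BB i⟩ hne
          have hcc : (BB i + A).card ≤ (BB (i + 1)).card := Finset.card_le_card (hBBadd i)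
          have : (i + 1 + 1) * A.card = (i + 1) * A.card + A.card := by ring
          omega
    have hchainJ := hchain J hJge1 (le_refl J)
    -- sub-level bound
    have hsplit := Finset.sum_filter_add_sum_filter_not (univ : Finset H)
      (fun h => lam S h ≤ J * m) (lam S)
    have hBJeq : BB J = univ.filter (fun h => lam S h ≤ J * m) := by rw [hBB]
    have hb1 : ∑ h ∈ univ.filter (fun h => lam S h ≤ J * m), lam S h ≤ (BB J).card * (J * m) := by
      rw [hBJeq]
      simpa [smul_eq_mul] using Finset.sum_le_card_nsmul
        (univ.filter (fun h => lam S h ≤ J * m)) (lam S) (J * m)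
        (fun h hh => (Finset.mem_filter.1 hh).2)
    have hb2 : ∑ h ∈ univ.filter (fun h => ¬ lam S h ≤ J * m), lam S h ≤
        (univ.filter (fun h => ¬ lam S h ≤ J * m)).card * d := by
      simpa [smul_eq_mul] using Finset.sum_le_card_nsmul
        (univ.filter (fun h => ¬ lam S h ≤ J * m)) (lam S) d (fun h _ => hlamled h)
    have hbcard : (BB J).card + (univ.filter (fun h => ¬ lam S h ≤ J * m)).card = n := by
      rw [hBJeq]
      rw [Finset.card_filter_add_card_filter_not, Finset.card_univ]
    -- assemble: Σ ≤ b (Jm) + (n - b) d  and  Σ + d² = n d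
    set b := (BB J).card with hbdef
    set u := (univ.filter (fun h => ¬ lam S h ≤ J * m)).card with hudef
    have hsumtot : Sᶜ.card * S.card ≤ b * (J * m) + u * d := by
      rw [← sum_lam S, ← hsplit]
      exact Nat.add_le_add hb1 hb2
    have hb1' : 1 ≤ b := Finset.card_pos.2 ⟨0, h0BB J⟩
    -- final contradiction over ℝ
    have H1 : (b : ℝ) * d - b * (J * m) ≤ (d:ℝ) * d := by
      have e1 : (Sᶜ.card * S.card : ℝ) + d * d = n * d := by exact_mod_cast hkey
      have e2 : (Sᶜ.card * S.card : ℝ) ≤ b * (J * m) + u * d := by exact_mod_cast hsumtot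
      have e3 : (b : ℝ) + u = n := by exact_mod_cast hbcard
      have e4 : (u:ℝ) * d = (n:ℝ) * d - (b:ℝ) * d := by rw [← e3]; ring
      linarith
    have H2 : ((J : ℝ) + 1) * A.card ≤ 2 * b := by exact_mod_cast hchainJ
    have H3 : (d : ℝ) ≤ ((J : ℝ) + 1) * (2 * m) := by exact_mod_cast hJ2
    have H4 : (J : ℝ) * (2 * m) ≤ (d : ℝ) - 1 := by
      have : ((J * (2 * m) : ℕ) : ℝ) ≤ ((d - 1 : ℕ) : ℝ) := by exact_mod_cast hJ1
      have hdd : ((d - 1 : ℕ) : ℝ) = (d : ℝ) - 1 := by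
        have : (1:ℕ) ≤ d := hd1
        push_cast [this]
        ring
      rw [hdd] at this
      push_cast at this
      linarith
    have H5 : 8 * (m:ℝ) + 1 ≤ (k:ℝ) := by exact_mod_cast hmk
    have H6 : (k : ℝ) ≤ (A.card : ℝ) := by exact_mod_cast hAk
    have H7 : 1 ≤ (d : ℝ) := by exact_mod_cast hd1
    have H8 : 1 ≤ (m : ℝ) := by exact_mod_cast hm1
    have H9 : 1 ≤ (b : ℝ) := by exact_mod_cast hb1'
    have H10 : 0 ≤ (J : ℝ) := Nat.cast_nonneg J
    exact endgame (A.card : ℝ) b d m J H1 H2 H3 H4 (le_trans H5 H6) H7 H8 H9 H10
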